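/- arXiv:1404.3600 — 7 statements merged into one kernel-verified Lean document; each statement's English description precedes it below -/
import Mathlib

section
/- For every integer n > 2 and every pair (α, β) of n-bit integers, a single query to the function x ↦ (α ∔ x) ⊕ (β ∔ x) cannot determine x modulo 2^(n-1): there exist n-bit integers x and x' with x mod 2^(n-1) ≠ x' mod 2^(n-1) such that (α ∔ x) ⊕ (β ∔ x) = (α ∔ x') ⊕ (β ∔ x'). -/
lemma xor_add_pow {k a b : ℕ} (hb : b < 2 ^ k) : (2 ^ k * a) ^^^ b = 2 ^ k * a + b := by
  rw [Nat.two_pow_add_eq_or_of_lt hb]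
  apply Nat.eq_of_testBit_eq
  intro j
  simp only [Nat.testBit_xor, Nat.testBit_or, Nat.testBit_two_pow_mul]
  rcases Nat.lt_or_ge j k with h | h
  · simp [Nat.not_le_of_lt h]
  · have : b.testBit j = false := Nat.testBit_lt_two_pow
      (lt_of_lt_of_le hb (Nat.pow_le_pow_right (by norm_num) h))
    simp [this]

lemma mod_shift_ne (n α s c : ℕ) (hn : 2 < n) (hα : α < 2 ^ n) (hc1 : 0 < c)
    (hc : c < 2 ^ (n - 1)) :
    (s + 2 ^ n - α) % 2 ^ n % 2 ^ (n - 1) ≠ (s + c + 2 ^ n - α) % 2 ^ n % 2 ^ (n - 1) := by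
  have hdvd : 2 ^ (n - 1) ∣ 2 ^ n := pow_dvd_pow 2 (by omega)
  rw [Nat.mod_mod_of_dvd _ hdvd, Nat.mod_mod_of_dvd _ hdvd]
  intro h
  have h2 : s + c + 2 ^ n - α = (s + 2 ^ n - α) + c := by omega
  rw [h2] at h
  have hd := (Nat.modEq_iff_dvd' (Nat.le_add_right _ _)).mp h
  rw [Nat.add_sub_cancel_left] at hd
  exact absurd (Nat.le_of_dvd hc1 hd) (not_le.2 hc)

/-- For every integer `n > 2` and every pair `(α, β)` of `n`-bit integers, a single query
to `x ↦ (α ∔ x) ⊕ (β ∔ x)` cannot determine `x` modulo `2^(n-1)`. -/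
theorem one_query_insufficient (n : ℕ) (hn : 2 < n) (α β : ℕ)
    (hα : α < 2 ^ n) (hβ : β < 2 ^ n) :
    ∃ x x' : ℕ, x < 2 ^ n ∧ x' < 2 ^ n ∧ x % 2 ^ (n - 1) ≠ x' % 2 ^ (n - 1) ∧
      ((α + x) % 2 ^ n) ^^^ ((β + x) % 2 ^ n) =
        ((α + x') % 2 ^ n) ^^^ ((β + x') % 2 ^ n) := by
  have hNpos : 0 < 2 ^ n := Nat.two_pow_pos n
  have hN4 : 2 ^ n = 4 * 2 ^ (n - 2) := by
    rw [show n = 2 + (n - 2) by omega, pow_add]; norm_num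
  have hM4 : 4 ≤ 2 ^ (n - 1) := by
    calc (4:ℕ) = 2 ^ 2 := by norm_num
    _ ≤ 2 ^ (n - 1) := Nat.pow_le_pow_right (by norm_num) (by omega)
  set δ := (β + 2 ^ n - α) % 2 ^ n with hδdef
  have hδlt : δ < 2 ^ n := Nat.mod_lt _ hNpos
  -- key computation lemmas
  have keyα : ∀ s, s < 2 ^ n → (α + (s + 2 ^ n - α) % 2 ^ n) % 2 ^ n = s := by
    intro s hs
    rw [Nat.add_mod_mod]
    have : α + (s + 2 ^ n - α) = s + 2 ^ n := by omega
    rw [this, Nat.add_mod_right, Nat.mod_eq_of_lt hs]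
  have keyβ : ∀ s, (β + (s + 2 ^ n - α) % 2 ^ n) % 2 ^ n = (s + δ) % 2 ^ n := by
    intro s
    rw [Nat.add_mod_mod]
    have : β + (s + 2 ^ n - α) = s + (β + 2 ^ n - α) := by omega
    rw [this, hδdef, Nat.add_mod_mod]
  have xor13 : ∀ m : ℕ, 1 ^^^ (4 * m) = 3 ^^^ (4 * m + 2) := by
    intro m
    have h2 : (4 : ℕ) * m + 2 = (2 ^ 2 * m) ^^^ 2 := by
      rw [xor_add_pow (by norm_num)]; ring_nf
    have h1 : (4 : ℕ) * m = 2 ^ 2 * m := by ring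
    rw [h2, h1, Nat.xor_comm 3, Nat.xor_assoc, Nat.xor_comm 1,
      show (2:ℕ) ^^^ 3 = 1 by decide]
  rcases (show δ % 2 = 0 ∨ δ % 4 = 1 ∨ δ % 4 = 3 by omega) with h | h | h
  · -- δ even : use s = 0, s' = 1, difference 1
    obtain ⟨m, hm⟩ : ∃ m, δ = 2 * m := ⟨δ / 2, by omega⟩
    refine ⟨(0 + 2 ^ n - α) % 2 ^ n, (0 + 1 + 2 ^ n - α) % 2 ^ n,
      Nat.mod_lt _ hNpos, Nat.mod_lt _ hNpos,
      mod_shift_ne n α 0 1 hn hα one_pos (by omega), ?_⟩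
    rw [keyα 0 (by omega), keyβ 0, show (0:ℕ)+1 = 1 from rfl,
      keyα 1 (by omega), keyβ 1, Nat.zero_add,
      Nat.mod_eq_of_lt hδlt, Nat.mod_eq_of_lt (show 1 + δ < 2 ^ n by omega)]
    have h1δ : 1 + δ = (2 ^ 1 * m) ^^^ 1 := by
      rw [xor_add_pow (by norm_num)]; omega
    rw [h1δ, Nat.xor_comm _ 1, ← Nat.xor_assoc, Nat.xor_self, Nat.zero_xor, Nat.zero_xor, hm]
    ring
  · -- δ ≡ 1 [4] : use s = 0, s' = 2
    obtain ⟨m, hm⟩ : ∃ m, δ = 4 * m + 1 := ⟨δ / 4, by omega⟩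
    refine ⟨(0 + 2 ^ n - α) % 2 ^ n, (0 + 2 + 2 ^ n - α) % 2 ^ n,
      Nat.mod_lt _ hNpos, Nat.mod_lt _ hNpos,
      mod_shift_ne n α 0 2 hn hα two_pos (by omega), ?_⟩
    rw [keyα 0 (by omega), keyβ 0, show (0:ℕ)+2 = 2 from rfl,
      keyα 2 (by omega), keyβ 2, Nat.zero_add,
      Nat.mod_eq_of_lt hδlt, Nat.mod_eq_of_lt (show 2 + δ < 2 ^ n by omega)]
    have h2δ : 2 + δ = (2 ^ 2 * m) ^^^ 3 := by
      rw [xor_add_pow (by norm_num)]; omega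
    have hδx : δ = (2 ^ 2 * m) ^^^ 1 := by
      rw [xor_add_pow (by norm_num)]; omega
    rw [h2δ, hδx, Nat.zero_xor, Nat.xor_comm 2, Nat.xor_assoc,
      show (3:ℕ) ^^^ 2 = 1 by decide]
  · -- δ ≡ 3 [4] : use s = 1, s' = 3
    by_cases htop : δ = 2 ^ n - 1
    · refine ⟨(1 + 2 ^ n - α) % 2 ^ n, (1 + 2 + 2 ^ n - α) % 2 ^ n,
        Nat.mod_lt _ hNpos, Nat.mod_lt _ hNpos,
        mod_shift_ne n α 1 2 hn hα two_pos (by omega), ?_⟩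
      rw [keyα 1 (by omega), keyβ 1, show (1:ℕ)+2 = 3 from rfl,
        keyα 3 (by omega), keyβ 3, htop,
        show 1 + (2 ^ n - 1) = 2 ^ n + 0 by omega,
        show 3 + (2 ^ n - 1) = 2 ^ n + 2 by omega,
        Nat.add_mod_left, Nat.add_mod_left,
        Nat.mod_eq_of_lt (show (0:ℕ) < 2 ^ n by omega),
        Nat.mod_eq_of_lt (show (2:ℕ) < 2 ^ n by omega)]
      decide
    · obtain ⟨m, hm⟩ : ∃ m, δ = 4 * m + 3 := ⟨δ / 4, by omega⟩
      have hδle : δ ≤ 2 ^ n - 5 := by omega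
      refine ⟨(1 + 2 ^ n - α) % 2 ^ n, (1 + 2 + 2 ^ n - α) % 2 ^ n,
        Nat.mod_lt _ hNpos, Nat.mod_lt _ hNpos,
        mod_shift_ne n α 1 2 hn hα two_pos (by omega), ?_⟩
      rw [keyα 1 (by omega), keyβ 1, show (1:ℕ)+2 = 3 from rfl,
        keyα 3 (by omega), keyβ 3,
        Nat.mod_eq_of_lt (show 1 + δ < 2 ^ n by omega),
        Nat.mod_eq_of_lt (show 3 + δ < 2 ^ n by omega),
        show 1 + δ = 4 * (m + 1) by omega,
        show 3 + δ = 4 * (m + 1) + 2 by omega]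
      exact xor13 (m + 1)
end

section
/- For n = 2, a single query suffices to determine x modulo 2: there exist 2-bit integers α and β (0 ≤ α, β < 4) such that for all 2-bit integers x and x' (0 ≤ x, x' < 4), if ((α + x) mod 4) ⊕ ((β + x) mod 4) = ((α + x') mod 4) ⊕ ((β + x') mod 4), then x mod 2 = x' mod 2. -/
/-- For `n = 2`, a single query suffices to determine `x` modulo `2`. -/
theorem one_query_suffices_two_bits :
    ∃ α β : ℕ, α < 4 ∧ β < 4 ∧
      ∀ x x' : ℕ, x < 4 → x' < 4 →
        ((α + x) % 4) ^^^ ((β + x) % 4) = ((α + x') % 4) ^^^ ((β + x') % 4) →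
        x % 2 = x' % 2 := by
  use 0, 1
  refine ⟨by norm_num, by norm_num, ?_⟩
  intro x x' hx hx'
  interval_cases x <;> interval_cases x' <;> simp_all
end

section
/- For n = 8, the two queries (α, β) = (0, 170) and (α, β) = (170, 85) determine x modulo 128: for all integers x and x' with 0 ≤ x, x' < 256, if ((0 + x) mod 256) ⊕ ((170 + x) mod 256) = ((0 + x') mod 256) ⊕ ((170 + x') mod 256) and ((170 + x) mod 256) ⊕ ((85 + x) mod 256) = ((170 + x') mod 256) ⊕ ((85 + x') mod 256), then x mod 128 = x' mod 128. -/
set_option maxRecDepth 100000 in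
set_option maxHeartbeats 4000000 in
lemma two_queries_aux : ∀ x < 256, ∀ x' < 256,
    ((0 + x) % 256) ^^^ ((170 + x) % 256) = ((0 + x') % 256) ^^^ ((170 + x') % 256) →
    ((170 + x) % 256) ^^^ ((85 + x) % 256) = ((170 + x') % 256) ^^^ ((85 + x') % 256) →
    x % 128 = x' % 128 := by decide

/-- For `n = 8`, the two queries `(α, β) = (0, 170)` and `(α, β) = (170, 85)` determine
`x` modulo `128`. -/
theorem two_queries_determine_x_mod_128 (x x' : ℕ) (hx : x < 256) (hx' : x' < 256)
    (h1 : ((0 + x) % 256) ^^^ ((170 + x) % 256) = ((0 + x') % 256) ^^^ ((170 + x') % 256))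
    (h2 : ((170 + x) % 256) ^^^ ((85 + x) % 256) = ((170 + x') % 256) ^^^ ((85 + x') % 256)) :
    x % 128 = x' % 128 :=
  two_queries_aux x hx x' hx' h1 h2
end

section
/- The function y = (α ∔ x) ⊕ (β ∔ x) is invariant under flipping the most significant bit of x: for every integer n ≥ 1 and all integers α, β, x with 0 ≤ α, β, x < 2^n, one has (α ∔ (x ⊕ 2^(n-1))) ⊕ (β ∔ (x ⊕ 2^(n-1))) = (α ∔ x) ⊕ (β ∔ x). -/
lemma xor_two_pow_of_lt {k a : ℕ} (h : a < 2 ^ k) : a ^^^ 2 ^ k = a + 2 ^ k := by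
  apply Nat.eq_of_testBit_eq
  intro j
  rcases lt_trichotomy j k with hj | rfl | hj
  · rw [Nat.testBit_xor, Nat.testBit_two_pow_of_ne hj.ne', Nat.add_comm,
      Nat.testBit_two_pow_add_gt hj]
    simp
  · rw [Nat.testBit_xor, Nat.testBit_two_pow_self, Nat.add_comm,
      Nat.testBit_two_pow_add_eq, Nat.testBit_lt_two_pow h]
    simp
  · have hle : 2 ^ k + 2 ^ k ≤ 2 ^ j := by
      rw [← two_mul, ← pow_succ']
      exact Nat.pow_le_pow_right (by norm_num) hj
    rw [Nat.testBit_xor, Nat.testBit_two_pow_of_ne hj.ne,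
      Nat.testBit_lt_two_pow (h.trans_le (by omega)), Nat.testBit_lt_two_pow (by omega)]
    simp

lemma xor_xor_cancel (a b c : ℕ) : (a ^^^ c) ^^^ (b ^^^ c) = a ^^^ b := by
  rw [Nat.xor_assoc, Nat.xor_comm c, Nat.xor_assoc, Nat.xor_self, Nat.xor_zero]

lemma add_two_pow_mod {n : ℕ} (hn : 1 ≤ n) (m : ℕ) :
    (m + 2 ^ (n - 1)) % 2 ^ n = m % 2 ^ n ^^^ 2 ^ (n - 1) := by
  set k := n - 1
  have hkn : 2 ^ n = 2 ^ k + 2 ^ k := by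
    rw [← two_mul, ← pow_succ']
    congr 1
    omega
  have ha : m % 2 ^ n < 2 ^ n := Nat.mod_lt _ (Nat.pow_pos two_pos)
  have hrw : (m + 2 ^ k) % 2 ^ n = (m % 2 ^ n + 2 ^ k) % 2 ^ n := by
    conv_lhs => rw [← Nat.mod_add_mod]
  rw [hrw]
  set a := m % 2 ^ n with ha_def
  rcases lt_or_ge a (2 ^ k) with hlt | hge
  · rw [xor_two_pow_of_lt hlt, Nat.mod_eq_of_lt (by omega)]
  · have hb : a - 2 ^ k < 2 ^ k := by omega
    have h1 : a + 2 ^ k = (a - 2 ^ k) + 2 ^ n := by omega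
    have hx : a ^^^ 2 ^ k = a - 2 ^ k := by
      calc a ^^^ 2 ^ k = ((a - 2 ^ k) ^^^ 2 ^ k) ^^^ 2 ^ k := by
            rw [xor_two_pow_of_lt hb]; congr 1; omega
        _ = a - 2 ^ k := xor_cancel_right _ _
    rw [hx, h1, Nat.add_mod_right, Nat.mod_eq_of_lt (by omega)]

/-- `(α ∔ x) ⊕ (β ∔ x)` is invariant under flipping the most significant bit of `x`. -/
theorem query_invariant_msb_flip (n : ℕ) (hn : 1 ≤ n) (α β x : ℕ)
    (hα : α < 2 ^ n) (hβ : β < 2 ^ n) (hx : x < 2 ^ n) :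
    ((α + (x ^^^ 2 ^ (n - 1))) % 2 ^ n) ^^^ ((β + (x ^^^ 2 ^ (n - 1))) % 2 ^ n) =
      ((α + x) % 2 ^ n) ^^^ ((β + x) % 2 ^ n) := by
  have key : ∀ γ : ℕ, (γ + (x ^^^ 2 ^ (n - 1))) % 2 ^ n = (γ + x) % 2 ^ n ^^^ 2 ^ (n - 1) := by
    intro γ
    rcases lt_or_ge x (2 ^ (n - 1)) with hlt | hge
    · rw [xor_two_pow_of_lt hlt, ← Nat.add_assoc, add_two_pow_mod hn]
    · have hb : x - 2 ^ (n - 1) < 2 ^ (n - 1) := by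
        have : 2 ^ n = 2 ^ (n - 1) + 2 ^ (n - 1) := by
          rw [← two_mul, ← pow_succ']; congr 1; omega
        omega
      have hxb : x ^^^ 2 ^ (n - 1) = x - 2 ^ (n - 1) := by
        calc x ^^^ 2 ^ (n - 1) = ((x - 2 ^ (n - 1)) ^^^ 2 ^ (n - 1)) ^^^ 2 ^ (n - 1) := by
              rw [xor_two_pow_of_lt hb]; congr 1; omega
          _ = x - 2 ^ (n - 1) := xor_cancel_right _ _
      have heq : γ + x = (γ + (x ^^^ 2 ^ (n - 1))) + 2 ^ (n - 1) := by
        rw [hxb]; omega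
      rw [heq, add_two_pow_mod hn, xor_cancel_right]
  rw [key α, key β, xor_xor_cancel]
end

section
/- For the chosen plain-image with constant channel values 0, 170 and 85, the consecutive ciphertext XOR differences yield exactly the two query values needed to recover X(i): let (X(i))_{i≥1}, (Y(i))_{i≥1}, (Z(i))_{i≥1} be sequences of 8-bit integers and define R'(0) = G'(0) = B'(0) = 0 and, for i ≥ 1, R'(i) = ( ((rot(0) + X(i)) mod 256) ⊕ Y(i) ) ⊕ R'(i−1) ⊕ Z(i), G'(i) = ( ((rot(170) + X(i)) mod 256) ⊕ Y(i) ) ⊕ G'(i−1) ⊕ Z(i), and B'(i) = ( ((rot(85) + X(i)) mod 256) ⊕ Y(i) ) ⊕ B'(i−1) ⊕ Z(i). Then for every i ≥ 1, R'(i) ⊕ R'(i−1) ⊕ G'(i) ⊕ G'(i−1) = ((0 + X(i)) mod 256) ⊕ ((170 + X(i)) mod 256), and G'(i) ⊕ G'(i−1) ⊕ B'(i) ⊕ B'(i−1) = ((170 + X(i)) mod 256) ⊕ ((85 + X(i)) mod 256). -/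
/-- The 4-bit cyclic rotation on 8-bit integers: `rot a = 16·(a mod 16) + ⌊a/16⌋`. -/
def rot (a : ℕ) : ℕ := 16 * (a % 16) + a / 16

/-- For the chosen plain-image with constant channel values 0, 170 and 85, the consecutive
ciphertext XOR differences yield exactly the two query values needed to recover `X(i)`. -/
theorem chosen_plaintext_queries (X Y Z R' G' B' : ℕ → ℕ)
    (hX : ∀ i, 1 ≤ i → X i < 256) (hY : ∀ i, 1 ≤ i → Y i < 256)
    (hZ : ∀ i, 1 ≤ i → Z i < 256)
    (hR0 : R' 0 = 0) (hG0 : G' 0 = 0) (hB0 : B' 0 = 0)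
    (hR : ∀ i, 1 ≤ i → R' i = (((rot 0 + X i) % 256) ^^^ Y i) ^^^ R' (i - 1) ^^^ Z i)
    (hG : ∀ i, 1 ≤ i → G' i = (((rot 170 + X i) % 256) ^^^ Y i) ^^^ G' (i - 1) ^^^ Z i)
    (hB : ∀ i, 1 ≤ i → B' i = (((rot 85 + X i) % 256) ^^^ Y i) ^^^ B' (i - 1) ^^^ Z i) :
    ∀ i, 1 ≤ i →
      (R' i) ^^^ (R' (i - 1)) ^^^ (G' i) ^^^ (G' (i - 1)) =
          ((0 + X i) % 256) ^^^ ((170 + X i) % 256) ∧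
      (G' i) ^^^ (G' (i - 1)) ^^^ (B' i) ^^^ (B' (i - 1)) =
          ((170 + X i) % 256) ^^^ ((85 + X i) % 256) := by
  intro i hi
  rw [hR i hi, hG i hi, hB i hi]
  have h0 : rot 0 = 0 := by decide
  have h170 : rot 170 = 170 := by decide
  have h85 : rot 85 = 85 := by decide
  rw [h0, h170, h85]
  have lcomm : ∀ a b c : ℕ, a ^^^ (b ^^^ c) = b ^^^ (a ^^^ c) := fun a b c => by
    rw [← Nat.xor_assoc, Nat.xor_comm a b, Nat.xor_assoc]
  constructor <;>
  · simp [Nat.xor_assoc, Nat.xor_comm, lcomm, Nat.xor_self, Nat.xor_zero, Nat.zero_xor,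
      Nat.xor_xor_cancel_left, Nat.xor_xor_cancel_right]
end

section
/- The combined diffusion keystream pair (X, W) is equivalent to (X ⊕ 128, W ⊕ 128): for all integers a, X, W with 0 ≤ a, X, W < 256, one has ( ((rot(a) + (X ⊕ 128)) mod 256) ⊕ (W ⊕ 128) ) = ( ((rot(a) + X) mod 256) ⊕ W ). -/
set_option maxRecDepth 2000 in
lemma add128_xor : ∀ t : Fin 256, ((t : ℕ) + 128) % 256 = (t : ℕ) ^^^ 128 := by decide

set_option maxRecDepth 2000 in
lemma add128_xor' (t : ℕ) (ht : t < 256) : (t + 128) % 256 = t ^^^ 128 :=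
  add128_xor ⟨t, ht⟩

/-- The combined diffusion keystream pair `(X, W)` is equivalent to `(X ⊕ 128, W ⊕ 128)`. -/
theorem keystream_equivalence (a X W : ℕ) (ha : a < 256) (hX : X < 256) (hW : W < 256) :
    ((rot a + (X ^^^ 128)) % 256) ^^^ (W ^^^ 128) = ((rot a + X) % 256) ^^^ W := by
  have hx : X ^^^ 128 = (X + 128) % 256 := (add128_xor' X hX).symm
  have h1 : (rot a + (X ^^^ 128)) % 256 = (rot a + X + 128) % 256 := by
    omega
  have h2 : (rot a + X + 128) % 256 = ((rot a + X) % 256 + 128) % 256 := by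
    omega
  rw [h1, h2, add128_xor' _ (Nat.mod_lt _ (by norm_num))]
  rw [Nat.xor_comm W 128, ← Nat.xor_assoc, Nat.xor_assoc _ 128 128]
  simp
end

section
/- The ciphertext of the chosen plain-image with constant channel values 0, 170 and 85 determines the keystream X(i) modulo 128: let (X(i))_{i≥1}, (Y(i))_{i≥1}, (Z(i))_{i≥1} and (X'(i))_{i≥1}, (Y'(i))_{i≥1}, (Z'(i))_{i≥1} be sequences of 8-bit integers, and for each keystream triple define R'(0) = G'(0) = B'(0) = 0 and, for i ≥ 1, R'(i) = ( ((rot(0) + X(i)) mod 256) ⊕ Y(i) ) ⊕ R'(i−1) ⊕ Z(i), G'(i) = ( ((rot(170) + X(i)) mod 256) ⊕ Y(i) ) ⊕ G'(i−1) ⊕ Z(i), B'(i) = ( ((rot(85) + X(i)) mod 256) ⊕ Y(i) ) ⊕ B'(i−1) ⊕ Z(i), and similarly R''(i), G''(i), B''(i) from (X'(i), Y'(i), Z'(i)). If R'(i) = R''(i), G'(i) = G''(i) and B'(i) = B''(i) for all i ≥ 1, then X(i) mod 128 = X'(i) mod 128 for all i ≥ 1. -/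
set_option maxRecDepth 100000 in
set_option maxHeartbeats 4000000 in
private lemma key_xor_mod : ∀ a < 256, ∀ b < 256,
    (a ^^^ ((170 + a) % 256) = b ^^^ ((170 + b) % 256)) →
    (a ^^^ ((85 + a) % 256) = b ^^^ ((85 + b) % 256)) →
    a % 128 = b % 128 := by decide

private lemma xor_left_comm (a b c : ℕ) : a ^^^ (b ^^^ c) = b ^^^ (a ^^^ c) := by
  rw [← Nat.xor_assoc, Nat.xor_comm a b, Nat.xor_assoc]

private lemma xor_cancel_self (a b : ℕ) : a ^^^ (a ^^^ b) = b := by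
  rw [← Nat.xor_assoc, Nat.xor_self, Nat.zero_xor]

private lemma xor_cancel_c (a y c z a' y' z' : ℕ)
    (h : ((a ^^^ y) ^^^ c) ^^^ z = ((a' ^^^ y') ^^^ c) ^^^ z') :
    (a ^^^ y) ^^^ z = (a' ^^^ y') ^^^ z' := by
  have h2 := congrArg (· ^^^ c) h
  simpa [Nat.xor_assoc, Nat.xor_comm, xor_left_comm, xor_cancel_self, Nat.xor_self, Nat.xor_zero, Nat.zero_xor] using h2

private lemma xor_cancel_yz (a b y z a' b' y' z' : ℕ)
    (h1 : (a ^^^ y) ^^^ z = (a' ^^^ y') ^^^ z')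
    (h2 : (b ^^^ y) ^^^ z = (b' ^^^ y') ^^^ z') :
    a ^^^ b = a' ^^^ b' := by
  have h3 : (((a ^^^ y) ^^^ z) ^^^ ((b ^^^ y) ^^^ z)) =
      (((a' ^^^ y') ^^^ z') ^^^ ((b' ^^^ y') ^^^ z')) := by rw [h1, h2]
  simpa [Nat.xor_assoc, Nat.xor_comm, xor_left_comm, xor_cancel_self, Nat.xor_self, Nat.xor_zero, Nat.zero_xor] using h3

/-- The ciphertext of the chosen plain-image with constant channel values 0, 170 and 85
determines the keystream `X(i)` modulo 128. -/
theorem ciphertext_determines_keystream_mod_128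
    (X Y Z X' Y' Z' R' G' B' R'' G'' B'' : ℕ → ℕ)
    (hX : ∀ i, 1 ≤ i → X i < 256) (hY : ∀ i, 1 ≤ i → Y i < 256)
    (hZ : ∀ i, 1 ≤ i → Z i < 256)
    (hX' : ∀ i, 1 ≤ i → X' i < 256) (hY' : ∀ i, 1 ≤ i → Y' i < 256)
    (hZ' : ∀ i, 1 ≤ i → Z' i < 256)
    (hR0 : R' 0 = 0) (hG0 : G' 0 = 0) (hB0 : B' 0 = 0)
    (hR0' : R'' 0 = 0) (hG0' : G'' 0 = 0) (hB0' : B'' 0 = 0)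
    (hR : ∀ i, 1 ≤ i → R' i = (((rot 0 + X i) % 256) ^^^ Y i) ^^^ R' (i - 1) ^^^ Z i)
    (hG : ∀ i, 1 ≤ i → G' i = (((rot 170 + X i) % 256) ^^^ Y i) ^^^ G' (i - 1) ^^^ Z i)
    (hB : ∀ i, 1 ≤ i → B' i = (((rot 85 + X i) % 256) ^^^ Y i) ^^^ B' (i - 1) ^^^ Z i)
    (hR' : ∀ i, 1 ≤ i → R'' i = (((rot 0 + X' i) % 256) ^^^ Y' i) ^^^ R'' (i - 1) ^^^ Z' i)
    (hG' : ∀ i, 1 ≤ i → G'' i = (((rot 170 + X' i) % 256) ^^^ Y' i) ^^^ G'' (i - 1) ^^^ Z' i)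
    (hB' : ∀ i, 1 ≤ i → B'' i = (((rot 85 + X' i) % 256) ^^^ Y' i) ^^^ B'' (i - 1) ^^^ Z' i)
    (heqR : ∀ i, 1 ≤ i → R' i = R'' i)
    (heqG : ∀ i, 1 ≤ i → G' i = G'' i)
    (heqB : ∀ i, 1 ≤ i → B' i = B'' i) :
    ∀ i, 1 ≤ i → X i % 128 = X' i % 128 := by
  have hrot0 : rot 0 = 0 := by norm_num [rot]
  have hrot170 : rot 170 = 170 := by norm_num [rot]
  have hrot85 : rot 85 = 85 := by norm_num [rot]
  -- equality at all indices, including 0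
  have hRall : ∀ i, R' i = R'' i := by
    intro i; rcases Nat.eq_zero_or_pos i with h | h
    · rw [h, hR0, hR0']
    · exact heqR i h
  have hGall : ∀ i, G' i = G'' i := by
    intro i; rcases Nat.eq_zero_or_pos i with h | h
    · rw [h, hG0, hG0']
    · exact heqG i h
  have hBall : ∀ i, B' i = B'' i := by
    intro i; rcases Nat.eq_zero_or_pos i with h | h
    · rw [h, hB0, hB0']
    · exact heqB i h
  intro i hi
  -- per-channel equations
  have eR : (((rot 0 + X i) % 256) ^^^ Y i) ^^^ Z i
      = (((rot 0 + X' i) % 256) ^^^ Y' i) ^^^ Z' i := by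
    apply xor_cancel_c _ _ (R' (i-1)) _ _ _ _
    have h1 := hR i hi
    have h2 := hR' i hi
    rw [← hRall (i-1)] at h2
    rw [← h1, ← h2]
    exact heqR i hi
  have eG : (((rot 170 + X i) % 256) ^^^ Y i) ^^^ Z i
      = (((rot 170 + X' i) % 256) ^^^ Y' i) ^^^ Z' i := by
    apply xor_cancel_c _ _ (G' (i-1)) _ _ _ _
    have h1 := hG i hi
    have h2 := hG' i hi
    rw [← hGall (i-1)] at h2
    rw [← h1, ← h2]
    exact heqG i hi
  have eB : (((rot 85 + X i) % 256) ^^^ Y i) ^^^ Z i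
      = (((rot 85 + X' i) % 256) ^^^ Y' i) ^^^ Z' i := by
    apply xor_cancel_c _ _ (B' (i-1)) _ _ _ _
    have h1 := hB i hi
    have h2 := hB' i hi
    rw [← hBall (i-1)] at h2
    rw [← h1, ← h2]
    exact heqB i hi
  have eRG := xor_cancel_yz _ _ _ _ _ _ _ _ eR eG
  have eRB := xor_cancel_yz _ _ _ _ _ _ _ _ eR eB
  have hx : X i % 256 = X i := Nat.mod_eq_of_lt (hX i hi)
  have hx' : X' i % 256 = X' i := Nat.mod_eq_of_lt (hX' i hi)
  simp only [hrot0, hrot170, hrot85, Nat.zero_add, hx, hx'] at eRG eRB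
  exact key_xor_mod (X i) (hX i hi) (X' i) (hX' i hi) eRG eRB
end
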